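/- arXiv:2303.10159 — 2 statements merged into one kernel-verified Lean document; each statement's English description precedes it below -/
import Mathlib

section
/- Let M be a (2n+1)-dimensional generalized (κ,μ)-space form admitting a conformal Ricci soliton (g, V, λ) with V = bξ for a smooth function b, pointwise collinear with the Reeb field ξ. Then X(b)η(Y) + Y(b)η(X) + 2S(X,Y) = [2λ - (p + 2/(2n+1))]g(X,Y) for all X,Y; in particular, evaluating at Y = ξ gives db = [λ - (p/2 + 1/(2n+1)) - 2n(f₁-f₃)]η. -/
/-- Conformal Ricci soliton with potential V = bξ pointwise collinear with the Reeb field: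
X(b)η(Y) + Y(b)η(X) + 2S(X,Y) = [2λ - (p + 2/(2n+1))]g(X,Y), and evaluating at Y = ξ gives
db = [λ - (p/2 + 1/(2n+1)) - 2n(f₁-f₃)]η. -/
theorem stmt_3 {V : Type*} [AddCommGroup V] [Module ℝ V]
    (n : ℕ) (hn : 1 ≤ n)
    (g S L : V → V → ℝ) (nab : V → V → V) (φm h : V → V) (η Db : V → ℝ) (ξ : V)
    (b f₁ f₃ f₄ f₆ lam p : ℝ)
    (hηξ : η ξ = 1)
    (hgξ : ∀ X, g X ξ = η X)
    (gsym : ∀ X Y, g X Y = g Y X)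
    (hSξ : ∀ X, S X ξ = 2 * (n : ℝ) * (f₁ - f₃) * η X)
    (hSsym : ∀ X Y, S X Y = S Y X)
    (hnabxi : ∀ X, nab X ξ = (f₃ - f₁) • φm X + (f₆ - f₄) • φm (h X))
    (hskew : ∀ X Y, g (nab X ξ) Y + g X (nab Y ξ) = 0)
    (hLie : ∀ X Y, L X Y = b * (g (nab X ξ) Y + g X (nab Y ξ))
      + Db X * η Y + Db Y * η X)
    (hsol : ∀ X Y, L X Y + 2 * S X Y =
      (2 * lam - (p + 2 / (2 * (n : ℝ) + 1))) * g X Y) :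
    (∀ X Y, Db X * η Y + Db Y * η X + 2 * S X Y =
      (2 * lam - (p + 2 / (2 * (n : ℝ) + 1))) * g X Y) ∧
    (∀ X, Db X =
      (lam - (p / 2 + 1 / (2 * (n : ℝ) + 1)) - 2 * (n : ℝ) * (f₁ - f₃)) * η X) := by
  have key : ∀ X Y, Db X * η Y + Db Y * η X + 2 * S X Y =
      (2 * lam - (p + 2 / (2 * (n : ℝ) + 1))) * g X Y := by
    intro X Y
    have := hsol X Y
    rw [hLie X Y, hskew X Y] at this
    linarith
  refine ⟨key, ?_⟩
  have hξξ := key ξ ξ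
  rw [hηξ, hSξ ξ, hηξ, hgξ ξ, hηξ] at hξξ
  have hDξ : Db ξ = lam - (p / 2 + 1 / (2 * (n : ℝ) + 1)) - 2 * (n : ℝ) * (f₁ - f₃) := by
    have : (2 : ℝ) / (2 * (n : ℝ) + 1) = 2 * (1 / (2 * (n : ℝ) + 1)) := by ring
    linarith [hξξ, this ▸ hξξ]
  intro X
  have hX := key X ξ
  rw [hηξ, hSξ X, hgξ X, hDξ] at hX
  have : (2 : ℝ) / (2 * (n : ℝ) + 1) = 2 * (1 / (2 * (n : ℝ) + 1)) := by ring
  rw [this] at hX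
  linarith
end

section
/- Let M be a (2n+1)-dimensional generalized (κ,μ)-space form admitting a conformal Ricci soliton (g, V, λ) with V = bξ pointwise collinear with ξ. Since η is a contact form (dη ≠ 0), the function b is constant, λ = 2n(f₁-f₃) + p/2 + 1/(2n+1), M is Einstein with S(X,Y) = [λ - (p/2 + 1/(2n+1))]g(X,Y), and the scalar curvature equals r = 2n(2n+1)(f₁-f₃). -/
/-- Theorem 3.3: for a conformal Ricci soliton with V = bξ on a generalized (κ,μ)-space
form (dη ≠ 0), b is constant, λ = 2n(f₁-f₃) + p/2 + 1/(2n+1), M is Einstein with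
S = [λ - (p/2 + 1/(2n+1))]g, and the scalar curvature is r = 2n(2n+1)(f₁-f₃). -/
theorem stmt_4 {V : Type*} [AddCommGroup V] [Module ℝ V]
    (n : ℕ) (hn : 1 ≤ n)
    (g S L : V → V → ℝ) (nab : V → V → V) (φm h : V → V) (η Db : V → ℝ) (ξ : V)
    (dd : (V → ℝ) → V → V → ℝ)
    (e : Fin (2 * n + 1) → V) (r : ℝ)
    (b f₁ f₃ f₄ f₆ lam p : ℝ)
    (hηξ : η ξ = 1)
    (hgξ : ∀ X, g X ξ = η X)
    (gsym : ∀ X Y, g X Y = g Y X)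
    (hSξ : ∀ X, S X ξ = 2 * (n : ℝ) * (f₁ - f₃) * η X)
    (hSsym : ∀ X Y, S X Y = S Y X)
    (hnabxi : ∀ X, nab X ξ = (f₃ - f₁) • φm X + (f₆ - f₄) • φm (h X))
    (hskew : ∀ X Y, g (nab X ξ) Y + g X (nab Y ξ) = 0)
    (hLie : ∀ X Y, L X Y = b * (g (nab X ξ) Y + g X (nab Y ξ))
      + Db X * η Y + Db Y * η X)
    (hsol : ∀ X Y, L X Y + 2 * S X Y =
      (2 * lam - (p + 2 / (2 * (n : ℝ) + 1))) * g X Y)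
    -- d² = 0 applied to b :
    (hd2 : ∀ X Y, dd Db X Y = 0)
    -- d is linear over constants on the 1-form η :
    (hdlin : ∀ (c : ℝ) X Y, dd (fun Z => c * η Z) X Y = c * dd η X Y)
    -- η is a contact form : dη ≠ 0 :
    (hdeta : ∃ X Y, dd η X Y ≠ 0)
    -- traces over an orthonormal frame :
    (htrS : r = ∑ i, S (e i) (e i))
    (htrg : ∑ i, g (e i) (e i) = 2 * (n : ℝ) + 1)
    (htrη : ∑ i, Db (e i) * η (e i) = Db ξ) :
    (∀ X, Db X = 0) ∧
    lam = 2 * (n : ℝ) * (f₁ - f₃) + p / 2 + 1 / (2 * (n : ℝ) + 1) ∧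
    (∀ X Y, S X Y = (lam - (p / 2 + 1 / (2 * (n : ℝ) + 1))) * g X Y) ∧
    r = 2 * (n : ℝ) * (2 * (n : ℝ) + 1) * (f₁ - f₃) := by
  set c : ℝ := 2 * lam - (p + 2 / (2 * (n : ℝ) + 1)) with hc
  -- simplified soliton equation
  have hsol' : ∀ X Y, Db X * η Y + Db Y * η X + 2 * S X Y = c * g X Y := by
    intro X Y
    have := hsol X Y
    rw [hLie X Y, hskew X Y] at this
    linarith [this]
  -- apply with Y = ξ
  have hXξ : ∀ X, Db X + Db ξ * η X + 2 * (2 * (n : ℝ) * (f₁ - f₃)) * η X = c * η X := by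
    intro X
    have := hsol' X ξ
    rw [hηξ, hgξ, hSξ] at this
    linarith [this]
  have hξξ : Db ξ = (c - 4 * (n : ℝ) * (f₁ - f₃)) / 2 := by
    have := hXξ ξ
    rw [hηξ] at this
    linear_combination this / 2
  have hDbη : ∀ X, Db X = Db ξ * η X := by
    intro X
    linear_combination hXξ X - 2 * η X * hξξ
  -- use d² = 0 and dη ≠ 0
  obtain ⟨X0, Y0, hne⟩ := hdeta
  have hDbfun : Db = fun Z => Db ξ * η Z := funext hDbη
  have hk : Db ξ = 0 := by
    have h1 := hd2 X0 Y0
    rw [hDbfun, hdlin] at h1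
    exact (mul_eq_zero.mp h1).resolve_right hne
  have hDb0 : ∀ X, Db X = 0 := by
    intro X; rw [hDbη X, hk, zero_mul]
  -- Einstein equation
  have hS : ∀ X Y, 2 * S X Y = c * g X Y := by
    intro X Y
    have := hsol' X Y
    rw [hDb0 X, hDb0 Y] at this
    linarith [this]
  -- lambda value
  have hcval : c = 4 * (n : ℝ) * (f₁ - f₃) := by
    have := hS ξ ξ
    rw [hSξ, hgξ, hηξ] at this
    linarith [this]
  have hlam : lam = 2 * (n : ℝ) * (f₁ - f₃) + p / 2 + 1 / (2 * (n : ℝ) + 1) := by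
    have : 2 * lam - (p + 2 / (2 * (n : ℝ) + 1)) = 4 * (n : ℝ) * (f₁ - f₃) := by
      rw [← hc]; exact hcval
    have h2 : (2:ℝ) / (2 * (n : ℝ) + 1) = 2 * (1 / (2 * (n : ℝ) + 1)) := by ring
    linarith [this, h2.ge]
  have hcoef : lam - (p / 2 + 1 / (2 * (n : ℝ) + 1)) = c / 2 := by
    rw [hc]; ring
  have hEin : ∀ X Y, S X Y = (lam - (p / 2 + 1 / (2 * (n : ℝ) + 1))) * g X Y := by
    intro X Y
    rw [hcoef]
    linear_combination (hS X Y) / 2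
  refine ⟨hDb0, hlam, hEin, ?_⟩
  rw [htrS]
  have : ∑ i, S (e i) (e i) = (c / 2) * ∑ i, g (e i) (e i) := by
    rw [Finset.mul_sum]
    apply Finset.sum_congr rfl
    intro i _
    linear_combination (hS (e i) (e i)) / 2
  rw [this, htrg, hcval]
  ring
end
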